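/- In a plane graph with minimum degree at least 2 in which no 6-cycle has a chord, if a 3-face [v1 v2 u] is adjacent to a 4-face [v1 v2 v3 v4] whose boundary 4-cycle has no chord, then u ∉ {v3, v4}; that is, the two faces are normally adjacent, sharing exactly the edge v1 v2 and exactly the two vertices v1, v2. -/
import Mathlib


open SimpleGraph

def HasChorded6Cycle {V : Type*} (G : SimpleGraph V) : Prop :=
  ∃ a b c d e g : V, List.Nodup [a, b, c, d, e, g] ∧
    G.Adj a b ∧ G.Adj b c ∧ G.Adj c d ∧ G.Adj d e ∧ G.Adj e g ∧ G.Adj g a ∧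
    (G.Adj a c ∨ G.Adj b d ∨ G.Adj c e ∨ G.Adj d g ∨ G.Adj e a ∨ G.Adj g b ∨
     G.Adj a d ∨ G.Adj b e ∨ G.Adj c g)

/-- The list of (cyclically) consecutive pairs of a boundary walk. -/
def cyclicPairs {V : Type*} (l : List V) : List (V × V) := l.zip (l.rotate 1)

/-- A combinatorial plane embedding of a graph `G`: faces are given by closed boundary
walks, every edge lies on exactly two boundary-walk positions (counted over all faces,
with multiplicity), and Euler's formula holds. One face is distinguished as the outer
face. -/
structure PlaneEmbedding {V : Type*} (F : Type*) [Fintype V] [DecidableEq V] [Fintype F]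
    (G : SimpleGraph V) [DecidableRel G.Adj] where
  boundary : F → List V
  outer : F
  boundary_ne : ∀ f, boundary f ≠ []
  boundary_walk : ∀ f, ∀ p ∈ cyclicPairs (boundary f), G.Adj p.1 p.2
  edge_twice : ∀ v w : V, G.Adj v w →
    (∑ f, ((cyclicPairs (boundary f)).count (v, w) +
           (cyclicPairs (boundary f)).count (w, v))) = 2
  euler : (Fintype.card V : ℤ) - (G.edgeFinset.card : ℤ) + (Fintype.card F : ℤ) = 2

/-- In a plane graph with minimum degree at least 2 and no chorded 6-cycle, if a 3-face
`[v1 v2 u]` is adjacent to a 4-face `[v1 v2 v3 v4]` whose boundary 4-cycle has no chord,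
then `u ∉ {v3, v4}`: the two faces are normally adjacent. -/
theorem three_face_four_face_normally_adjacent {V F : Type*} [Fintype V] [DecidableEq V]
    [Fintype F] (G : SimpleGraph V) [DecidableRel G.Adj] (P : PlaneEmbedding F G)
    (hmin : ∀ v : V, 2 ≤ G.degree v)
    (hc6 : ¬ HasChorded6Cycle G)
    (f3 f4 : F) (hne : f3 ≠ f4) (v1 v2 v3 v4 u : V)
    (hb3 : P.boundary f3 = [v1, v2, u])
    (hb4 : P.boundary f4 = [v1, v2, v3, v4])
    (hnodup : List.Nodup [v1, v2, v3, v4])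
    (hchord1 : ¬ G.Adj v1 v3) (hchord2 : ¬ G.Adj v2 v4) :
    u ≠ v3 ∧ u ≠ v4 := by
  have hw := P.boundary_walk f3
  rw [hb3] at hw
  have h2u : G.Adj v2 u := hw (v2, u) (by simp [cyclicPairs, List.rotate])
  have hu1 : G.Adj u v1 := hw (u, v1) (by simp [cyclicPairs, List.rotate])
  constructor
  · rintro rfl
    exact hchord1 hu1.symm
  · rintro rfl
    exact hchord2 h2u
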